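/- arXiv:2507.15722 — 3 statements merged into one kernel-verified Lean document; each statement's English description precedes it below -/
import Mathlib

section
/- Let A > 1, κ > 1, C > 0 and i ∈ ℕ with i ≥ 1. Then the product over j = 1,…,i of A^{j·κ^{i-j+1}/(C(κ^i - 1))} is at most A^{κ²/(C(κ-1)²)}. -/
lemma sum_id (κ : ℝ) : ∀ i : ℕ, 1 ≤ i →
    (κ - 1) ^ 2 * ∑ j ∈ Finset.Icc 1 i, (j : ℝ) * κ ^ (i - j + 1)
      = κ ^ (i + 2) - (i + 1) * κ ^ 2 + i * κ := by
  intro i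
  induction i with
  | zero => omega
  | succ n ih =>
    intro _
    rcases Nat.eq_zero_or_pos n with hn | hn
    · subst hn
      simp [Finset.Icc_self]
      ring
    · rw [Finset.sum_Icc_succ_top (by omega)]
      have hre : ∑ j ∈ Finset.Icc 1 n, (j : ℝ) * κ ^ (n + 1 - j + 1)
          = κ * ∑ j ∈ Finset.Icc 1 n, (j : ℝ) * κ ^ (n - j + 1) := by
        rw [Finset.mul_sum]
        apply Finset.sum_congr rfl
        intro j hj
        have hjn : j ≤ n := (Finset.mem_Icc.mp hj).2
        have : n + 1 - j + 1 = (n - j + 1) + 1 := by omega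
        rw [this, pow_succ]
        ring
      rw [hre, mul_add, ← mul_assoc, mul_comm ((κ-1)^2) κ, mul_assoc,
        ih hn]
      have : n + 1 - (n + 1) + 1 = 1 := by omega
      rw [this]
      push_cast
      ring

theorem stmt_1 (A κ C : ℝ) (hA : 1 < A) (hκ : 1 < κ) (hC : 0 < C)
    (i : ℕ) (hi : 1 ≤ i) :
    ∏ j ∈ Finset.Icc 1 i, A ^ ((j : ℝ) * κ ^ (i - j + 1) / (C * (κ ^ i - 1)))
      ≤ A ^ (κ ^ 2 / (C * (κ - 1) ^ 2)) := by
  rw [← Real.rpow_sum_of_pos (by linarith : (0:ℝ) < A),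
    Real.rpow_le_rpow_left_iff hA, ← Finset.sum_div]
  have hκi : (1:ℝ) < κ ^ i := one_lt_pow₀ hκ (by omega)
  have hd1 : (0:ℝ) < C * (κ ^ i - 1) := mul_pos hC (by linarith)
  have hd2 : (0:ℝ) < C * (κ - 1) ^ 2 := mul_pos hC (pow_pos (by linarith) 2)
  rw [div_le_div_iff₀ hd1 hd2]
  have hid := sum_id κ i hi
  have hκ1 : (0:ℝ) < κ := by linarith
  have hkey : (∑ j ∈ Finset.Icc 1 i, (j : ℝ) * κ ^ (i - j + 1)) * (C * (κ - 1) ^ 2)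
      = C * (κ ^ (i + 2) - (i + 1) * κ ^ 2 + i * κ) := by linear_combination C * hid
  have hpa : κ ^ (i + 2) = κ ^ i * κ ^ 2 := pow_add κ i 2
  have hnn : 0 ≤ C * (i : ℝ) * (κ * (κ - 1)) :=
    mul_nonneg (mul_nonneg hC.le (Nat.cast_nonneg i)) (mul_nonneg hκ1.le (by linarith))
  nlinarith [hkey, hpa, hnn]
end

section
/- Let μ ∈ (0,1] and p > 1. For any vectors ξ, η ∈ ℝ^{Nk} one has |(μ² + |ξ|²)^{(p-2)/2}ξ − (μ² + |η|²)^{(p-2)/2}η| ≤ C·(μ² + |ξ|² + |η|²)^{(p-2)/2}·|ξ − η| for a constant C = C(p) > 0. -/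
open scoped RealInnerProductSpace

set_option maxHeartbeats 1000000 in
private lemma key_deriv (p μ : ℝ) (hμ : 0 < μ) {n : ℕ} (ζ : EuclideanSpace ℝ (Fin n)) :
    ∃ L : EuclideanSpace ℝ (Fin n) →L[ℝ] EuclideanSpace ℝ (Fin n),
      HasFDerivAt (fun x : EuclideanSpace ℝ (Fin n) =>
        ((μ ^ 2 + ‖x‖ ^ 2) ^ ((p - 2) / 2)) • x) L ζ ∧
      ‖L‖ ≤ (1 + |p - 2|) * (μ ^ 2 + ‖ζ‖ ^ 2) ^ ((p - 2) / 2) := by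
  set q : ℝ := (p - 2) / 2 with hq
  have ht : (0:ℝ) < μ ^ 2 + ‖ζ‖ ^ 2 := by positivity
  set D : EuclideanSpace ℝ (Fin n) →L[ℝ] ℝ :=
    (fderivInnerCLM ℝ (ζ, ζ)).comp
      ((ContinuousLinearMap.id ℝ _).prod (ContinuousLinearMap.id ℝ _)) with hD
  have h1 : HasFDerivAt (fun x : EuclideanSpace ℝ (Fin n) => μ ^ 2 + ‖x‖ ^ 2) D ζ := by
    have h := (hasFDerivAt_const (μ ^ 2) ζ).add
      ((hasFDerivAt_id ζ).inner ℝ (hasFDerivAt_id ζ))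
    simpa only [id_eq, real_inner_self_eq_norm_sq, zero_add, Pi.add_def] using h
  have h2 := h1.rpow_const (p := q) (Or.inl ht.ne')
  have h3 := h2.smul (hasFDerivAt_id ζ)
  refine ⟨_, h3, ?_⟩
  have htq : (0:ℝ) < (μ ^ 2 + ‖ζ‖ ^ 2) ^ q := Real.rpow_pos_of_pos ht q
  refine ContinuousLinearMap.opNorm_le_bound _ (by positivity) fun h => ?_
  have hDh : |D h| ≤ 2 * ‖ζ‖ * ‖h‖ := by
    have hDhh : D h = ⟪ζ, h⟫ + ⟪h, ζ⟫ := by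
      rw [hD]
      simp only [ContinuousLinearMap.comp_apply, ContinuousLinearMap.prod_apply,
        ContinuousLinearMap.coe_id', id_eq]
      exact fderivInnerCLM_apply _ _ _
    rw [hDhh]
    calc |⟪ζ, h⟫ + ⟪h, ζ⟫| ≤ |⟪ζ, h⟫| + |⟪h, ζ⟫| := abs_add_le _ _
    _ ≤ ‖ζ‖ * ‖h‖ + ‖h‖ * ‖ζ‖ := add_le_add (abs_real_inner_le_norm _ _) (abs_real_inner_le_norm _ _)
    _ = 2 * ‖ζ‖ * ‖h‖ := by ring
  have happ : (((μ ^ 2 + ‖ζ‖ ^ 2) ^ q) • ContinuousLinearMap.id ℝ (EuclideanSpace ℝ (Fin n)) +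
      ((q * (μ ^ 2 + ‖ζ‖ ^ 2) ^ (q - 1)) • D).smulRight ζ) h
      = ((μ ^ 2 + ‖ζ‖ ^ 2) ^ q) • h + ((q * (μ ^ 2 + ‖ζ‖ ^ 2) ^ (q - 1)) * D h) • ζ := by
    simp [ContinuousLinearMap.add_apply, ContinuousLinearMap.smulRight_apply]
  calc ‖(((μ ^ 2 + ‖ζ‖ ^ 2) ^ q) • ContinuousLinearMap.id ℝ (EuclideanSpace ℝ (Fin n)) +
      ((q * (μ ^ 2 + ‖ζ‖ ^ 2) ^ (q - 1)) • D).smulRight ζ) h‖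
      ≤ ((μ ^ 2 + ‖ζ‖ ^ 2) ^ q) * ‖h‖ + (|q| * (μ ^ 2 + ‖ζ‖ ^ 2) ^ (q - 1) * (2 * ‖ζ‖ * ‖h‖)) * ‖ζ‖ := by
        rw [happ]
        refine (norm_add_le _ _).trans (add_le_add ?_ ?_)
        · rw [norm_smul, Real.norm_eq_abs, abs_of_pos htq]
        · rw [norm_smul, Real.norm_eq_abs, abs_mul, abs_mul,
            abs_of_pos (Real.rpow_pos_of_pos ht (q - 1))]
          have : |q| * (μ ^ 2 + ‖ζ‖ ^ 2) ^ (q - 1) * |D h| ≤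
              |q| * (μ ^ 2 + ‖ζ‖ ^ 2) ^ (q - 1) * (2 * ‖ζ‖ * ‖h‖) :=
            mul_le_mul_of_nonneg_left hDh (by positivity)
          exact mul_le_mul_of_nonneg_right this (norm_nonneg ζ)
    _ ≤ (1 + |p - 2|) * (μ ^ 2 + ‖ζ‖ ^ 2) ^ q * ‖h‖ := by
        have hz2 : ‖ζ‖ ^ 2 ≤ μ ^ 2 + ‖ζ‖ ^ 2 := by nlinarith
        have hkey : (μ ^ 2 + ‖ζ‖ ^ 2) ^ (q - 1) * ‖ζ‖ ^ 2 ≤ (μ ^ 2 + ‖ζ‖ ^ 2) ^ q := by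
          calc (μ ^ 2 + ‖ζ‖ ^ 2) ^ (q - 1) * ‖ζ‖ ^ 2
              ≤ (μ ^ 2 + ‖ζ‖ ^ 2) ^ (q - 1) * (μ ^ 2 + ‖ζ‖ ^ 2) :=
                mul_le_mul_of_nonneg_left hz2 (Real.rpow_pos_of_pos ht _).le
            _ = (μ ^ 2 + ‖ζ‖ ^ 2) ^ q := by
                rw [← Real.rpow_add_one ht.ne']; ring_nf
        have hq2 : |q| = |p - 2| / 2 := by
          rw [hq, abs_div]; norm_num
        have hh : (0:ℝ) ≤ ‖h‖ := norm_nonneg h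
        have e1 : |q| * (μ ^ 2 + ‖ζ‖ ^ 2) ^ (q - 1) * (2 * ‖ζ‖ * ‖h‖) * ‖ζ‖
            = 2 * |q| * ((μ ^ 2 + ‖ζ‖ ^ 2) ^ (q - 1) * ‖ζ‖ ^ 2) * ‖h‖ := by ring
        have e2 : 2 * |q| * ((μ ^ 2 + ‖ζ‖ ^ 2) ^ (q - 1) * ‖ζ‖ ^ 2) * ‖h‖
            ≤ 2 * |q| * (μ ^ 2 + ‖ζ‖ ^ 2) ^ q * ‖h‖ :=
          mul_le_mul_of_nonneg_right
            (mul_le_mul_of_nonneg_left hkey (by positivity)) hh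
        have e3 : 2 * |q| = |p - 2| := by rw [hq2]; ring
        rw [e3] at e2
        rw [e1, e3]
        linarith [e2]

private lemma key_mvt (p μ : ℝ) (hμ : 0 < μ) {n : ℕ} (ξ η : EuclideanSpace ℝ (Fin n)) (M : ℝ)
    (hM : ∀ ζ ∈ segment ℝ ξ η, ((μ ^ 2 + ‖ζ‖ ^ 2) ^ ((p - 2) / 2) : ℝ) ≤ M) :
    ‖((μ ^ 2 + ‖ξ‖ ^ 2) ^ ((p - 2) / 2)) • ξ - ((μ ^ 2 + ‖η‖ ^ 2) ^ ((p - 2) / 2)) • η‖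
      ≤ (1 + |p - 2|) * M * ‖ξ - η‖ := by
  classical
  choose L hL hLn using fun ζ : EuclideanSpace ℝ (Fin n) => key_deriv p μ hμ ζ
  have h := (convex_segment ξ η).norm_image_sub_le_of_norm_hasFDerivWithin_le
    (fun ζ _ => (hL ζ).hasFDerivWithinAt)
    (fun ζ hζ => le_trans (hLn ζ)
      (mul_le_mul_of_nonneg_left (hM ζ hζ) (by positivity)))
    (right_mem_segment ℝ ξ η) (left_mem_segment ℝ ξ η)
  exact h

set_option maxHeartbeats 1000000 in
theorem stmt_3 (p μ : ℝ) (hp : 1 < p) (hμ₀ : 0 < μ) (hμ₁ : μ ≤ 1) :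
    ∃ C : ℝ, 0 < C ∧ ∀ (n : ℕ) (ξ η : EuclideanSpace ℝ (Fin n)),
      ‖((μ ^ 2 + ‖ξ‖ ^ 2) ^ ((p - 2) / 2)) • ξ - ((μ ^ 2 + ‖η‖ ^ 2) ^ ((p - 2) / 2)) • η‖
        ≤ C * (μ ^ 2 + ‖ξ‖ ^ 2 + ‖η‖ ^ 2) ^ ((p - 2) / 2) * ‖ξ - η‖ := by
  refine ⟨(9 + |p - 2|) * 8 ^ (|p - 2| / 2), by positivity, ?_⟩
  intro n ξ η
  set q : ℝ := (p - 2) / 2 with hqdef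
  set K : ℝ := 8 ^ (|p - 2| / 2) with hKdef
  set S : ℝ := μ ^ 2 + ‖ξ‖ ^ 2 + ‖η‖ ^ 2 with hSdef
  set m : ℝ := max ‖ξ‖ ‖η‖ with hmdef
  have hξm : ‖ξ‖ ≤ m := le_max_left _ _
  have hηm : ‖η‖ ≤ m := le_max_right _ _
  have hm0 : 0 ≤ m := le_trans (norm_nonneg ξ) hξm
  have hSpos : 0 < S := by positivity
  have hK1 : (1:ℝ) ≤ K := Real.one_le_rpow (by norm_num) (by positivity)
  have hKpos : (0:ℝ) < K := lt_of_lt_of_le one_pos hK1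
  have hSq : 0 < S ^ q := Real.rpow_pos_of_pos hSpos q
  have coefle : (1 + |p - 2|) ≤ 9 + |p - 2| := by linarith
  have hnd : (0:ℝ) ≤ ‖ξ - η‖ := norm_nonneg _
  -- segment bounds
  have hseg_up : ∀ ζ ∈ segment ℝ ξ η, ‖ζ‖ ≤ m := by
    intro ζ hζ
    obtain ⟨a, b, ha, hb, hab, rfl⟩ := hζ
    calc ‖a • ξ + b • η‖ ≤ ‖a • ξ‖ + ‖b • η‖ := norm_add_le _ _
      _ = a * ‖ξ‖ + b * ‖η‖ := by
          rw [norm_smul, norm_smul, Real.norm_eq_abs, Real.norm_eq_abs,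
            abs_of_nonneg ha, abs_of_nonneg hb]
      _ ≤ a * m + b * m :=
          add_le_add (mul_le_mul_of_nonneg_left hξm ha)
            (mul_le_mul_of_nonneg_left hηm hb)
      _ = m := by rw [← add_mul, hab, one_mul]
  have hseg_lo : ∀ ζ ∈ segment ℝ ξ η, m - ‖ξ - η‖ ≤ ‖ζ‖ := by
    intro ζ hζ
    obtain ⟨a, b, ha, hb, hab, rfl⟩ := hζ
    have e1 : a • ξ + b • η - ξ = b • (η - ξ) := by
      have ha' : a = 1 - b := by linarith
      rw [ha']; module
    have e2 : a • ξ + b • η - η = a • (ξ - η) := by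
      have hb' : b = 1 - a := by linarith
      rw [hb']; module
    have f1 : ‖a • ξ + b • η - ξ‖ ≤ ‖ξ - η‖ := by
      rw [e1, norm_smul, Real.norm_eq_abs, abs_of_nonneg hb, norm_sub_rev]
      exact mul_le_of_le_one_left hnd (by linarith)
    have f2 : ‖a • ξ + b • η - η‖ ≤ ‖ξ - η‖ := by
      rw [e2, norm_smul, Real.norm_eq_abs, abs_of_nonneg ha]
      exact mul_le_of_le_one_left hnd (by linarith)
    have g1 : ‖ξ‖ - ‖a • ξ + b • η‖ ≤ ‖ξ - η‖ := by
      have h := norm_sub_norm_le ξ (a • ξ + b • η)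
      rw [norm_sub_rev] at f1
      linarith [h.trans f1]
    have g2 : ‖η‖ - ‖a • ξ + b • η‖ ≤ ‖ξ - η‖ := by
      have h := norm_sub_norm_le η (a • ξ + b • η)
      rw [norm_sub_rev] at f2
      linarith [h.trans f2]
    rcases max_cases ‖ξ‖ ‖η‖ with ⟨hc, _⟩ | ⟨hc, _⟩ <;> rw [hmdef, hc] <;> linarith
  by_cases hp2 : 2 ≤ p
  · -- p ≥ 2 : MVT with upper bound on the segment
    have hq0 : 0 ≤ q := by rw [hqdef]; linarith
    have hM : ∀ ζ ∈ segment ℝ ξ η, ((μ ^ 2 + ‖ζ‖ ^ 2) ^ q : ℝ) ≤ K * S ^ q := by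
      intro ζ hζ
      have hup : μ ^ 2 + ‖ζ‖ ^ 2 ≤ S := by
        have h1 := hseg_up ζ hζ
        have h2 := pow_le_pow_left₀ (norm_nonneg ζ) h1 2
        have h3 : m ^ 2 ≤ ‖ξ‖ ^ 2 + ‖η‖ ^ 2 := by
          rcases max_cases ‖ξ‖ ‖η‖ with ⟨hc, _⟩ | ⟨hc, _⟩ <;> rw [hmdef, hc] <;>
            nlinarith [norm_nonneg ξ, norm_nonneg η]
        rw [hSdef]; linarith
      calc ((μ ^ 2 + ‖ζ‖ ^ 2) ^ q : ℝ) ≤ S ^ q :=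
            Real.rpow_le_rpow (by positivity) hup hq0
        _ ≤ K * S ^ q := le_mul_of_one_le_left hSq.le hK1
    have h := key_mvt p μ hμ₀ ξ η _ hM
    calc ‖((μ ^ 2 + ‖ξ‖ ^ 2) ^ q) • ξ - ((μ ^ 2 + ‖η‖ ^ 2) ^ q) • η‖
        ≤ (1 + |p - 2|) * (K * S ^ q) * ‖ξ - η‖ := h
      _ ≤ (9 + |p - 2|) * (K * S ^ q) * ‖ξ - η‖ := by
          have hx : (0:ℝ) ≤ K * S ^ q := by positivity
          have := mul_le_mul_of_nonneg_right
            (mul_le_mul_of_nonneg_right coefle hx) hnd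
          linarith
      _ = (9 + |p - 2|) * K * S ^ q * ‖ξ - η‖ := by ring
  · push_neg at hp2
    have hq0 : q ≤ 0 := by rw [hqdef]; linarith
    have hK8 : (8:ℝ) ^ (-q) = K := by
      rw [hKdef]
      congr 1
      rw [abs_of_nonpos (by linarith), hqdef]
      ring
    by_cases hc2 : ‖ξ - η‖ ≤ m / 2 ∨ m ≤ μ
    · -- MVT with lower bound S ≤ 8 (μ² + ‖ζ‖²) on the segment
      have hM : ∀ ζ ∈ segment ℝ ξ η, ((μ ^ 2 + ‖ζ‖ ^ 2) ^ q : ℝ) ≤ K * S ^ q := by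
        intro ζ hζ
        have h8 : S ≤ 8 * (μ ^ 2 + ‖ζ‖ ^ 2) := by
          have hξ2 : ‖ξ‖ ^ 2 ≤ m ^ 2 := pow_le_pow_left₀ (norm_nonneg ξ) hξm 2
          have hη2 : ‖η‖ ^ 2 ≤ m ^ 2 := pow_le_pow_left₀ (norm_nonneg η) hηm 2
          rcases hc2 with hc | hc
          · have h1 : m / 2 ≤ ‖ζ‖ := by
              have := hseg_lo ζ hζ; linarith
            have h2 : (m / 2) ^ 2 ≤ ‖ζ‖ ^ 2 :=
              pow_le_pow_left₀ (by linarith) h1 2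
            rw [hSdef]; nlinarith
          · have h1 : m ^ 2 ≤ μ ^ 2 := pow_le_pow_left₀ hm0 hc 2
            rw [hSdef]; nlinarith [sq_nonneg ‖ζ‖]
        have hdiv : S / 8 ≤ μ ^ 2 + ‖ζ‖ ^ 2 := by linarith
        calc ((μ ^ 2 + ‖ζ‖ ^ 2) ^ q : ℝ) ≤ (S / 8) ^ q :=
              Real.rpow_le_rpow_of_nonpos (div_pos hSpos (by norm_num)) hdiv hq0
          _ = S ^ q * (8:ℝ) ^ (-q) := by
              rw [Real.div_rpow hSpos.le (by norm_num), Real.rpow_neg (by norm_num)]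
              ring
          _ = K * S ^ q := by rw [hK8]; ring
      have h := key_mvt p μ hμ₀ ξ η _ hM
      calc ‖((μ ^ 2 + ‖ξ‖ ^ 2) ^ q) • ξ - ((μ ^ 2 + ‖η‖ ^ 2) ^ q) • η‖
          ≤ (1 + |p - 2|) * (K * S ^ q) * ‖ξ - η‖ := h
        _ ≤ (9 + |p - 2|) * (K * S ^ q) * ‖ξ - η‖ := by
            have hx : (0:ℝ) ≤ K * S ^ q := by positivity
            have := mul_le_mul_of_nonneg_right
              (mul_le_mul_of_nonneg_right coefle hx) hnd
            linarith
        _ = (9 + |p - 2|) * K * S ^ q * ‖ξ - η‖ := by ring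
    · -- triangle inequality case
      push_neg at hc2
      obtain ⟨hd, hμm⟩ := hc2
      have hmpos : 0 < m := lt_trans hμ₀ hμm
      have bnd : ∀ ζ : EuclideanSpace ℝ (Fin n), ‖ζ‖ ≤ m →
          ((μ ^ 2 + ‖ζ‖ ^ 2) ^ q : ℝ) * ‖ζ‖ ≤ 4 * (K * S ^ q) * ‖ξ - η‖ := by
        intro ζ hζm
        have htpos : (0:ℝ) < μ ^ 2 + ‖ζ‖ ^ 2 := by positivity
        have hmm : (0:ℝ) < μ ^ 2 + m ^ 2 := by positivity
        have step1 : ((μ ^ 2 + ‖ζ‖ ^ 2) ^ q : ℝ) * ‖ζ‖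
            ≤ (μ ^ 2 + ‖ζ‖ ^ 2) ^ ((q + 1/2 : ℝ)) := by
          have h1 : ‖ζ‖ ≤ (μ ^ 2 + ‖ζ‖ ^ 2) ^ ((1:ℝ)/2) := by
            rw [← Real.sqrt_eq_rpow]
            have hs := Real.sqrt_le_sqrt
              (show ‖ζ‖ ^ 2 ≤ μ ^ 2 + ‖ζ‖ ^ 2 by nlinarith [sq_nonneg μ])
            rwa [Real.sqrt_sq (norm_nonneg ζ)] at hs
          calc ((μ ^ 2 + ‖ζ‖ ^ 2) ^ q : ℝ) * ‖ζ‖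
              ≤ (μ ^ 2 + ‖ζ‖ ^ 2) ^ q * (μ ^ 2 + ‖ζ‖ ^ 2) ^ ((1:ℝ)/2) :=
                mul_le_mul_of_nonneg_left h1 (Real.rpow_pos_of_pos htpos q).le
            _ = (μ ^ 2 + ‖ζ‖ ^ 2) ^ ((q + 1/2 : ℝ)) := by
                rw [← Real.rpow_add htpos]
        have step2 : ((μ ^ 2 + ‖ζ‖ ^ 2) : ℝ) ^ ((q + 1/2 : ℝ))
            ≤ (μ ^ 2 + m ^ 2) ^ ((q + 1/2 : ℝ)) := by
          refine Real.rpow_le_rpow htpos.le ?_ ?_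
          · have := pow_le_pow_left₀ (norm_nonneg ζ) hζm 2; linarith
          · rw [hqdef]; linarith
        have step3 : ((μ ^ 2 + m ^ 2) : ℝ) ^ ((q + 1/2 : ℝ))
            = (μ ^ 2 + m ^ 2) ^ q * (μ ^ 2 + m ^ 2) ^ ((1:ℝ)/2) :=
          Real.rpow_add hmm q (1/2)
        have step4 : ((μ ^ 2 + m ^ 2) : ℝ) ^ ((1:ℝ)/2) ≤ 4 * ‖ξ - η‖ := by
          rw [← Real.sqrt_eq_rpow]
          have h1 : Real.sqrt (μ ^ 2 + m ^ 2) ≤ Real.sqrt ((2*m) ^ 2) := by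
            apply Real.sqrt_le_sqrt; nlinarith
          rw [Real.sqrt_sq (by linarith)] at h1
          linarith
        have step5 : ((μ ^ 2 + m ^ 2) : ℝ) ^ q ≤ K * S ^ q := by
          have hS2 : S ≤ 2 * (μ ^ 2 + m ^ 2) := by
            have hξ2 : ‖ξ‖ ^ 2 ≤ m ^ 2 := pow_le_pow_left₀ (norm_nonneg ξ) hξm 2
            have hη2 : ‖η‖ ^ 2 ≤ m ^ 2 := pow_le_pow_left₀ (norm_nonneg η) hηm 2
            rw [hSdef]; nlinarith [sq_nonneg μ]
          have h1 : ((2 * (μ ^ 2 + m ^ 2)) : ℝ) ^ q ≤ S ^ q :=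
            Real.rpow_le_rpow_of_nonpos hSpos hS2 hq0
          have h2 : ((2 * (μ ^ 2 + m ^ 2)) : ℝ) ^ q = 2 ^ q * (μ ^ 2 + m ^ 2) ^ q :=
            Real.mul_rpow (by norm_num) hmm.le
          have h3 : ((μ ^ 2 + m ^ 2) : ℝ) ^ q ≤ 2 ^ (-q) * S ^ q := by
            have h4 : (2:ℝ) ^ (-q) * (2 ^ q * (μ ^ 2 + m ^ 2) ^ q) ≤ 2 ^ (-q) * S ^ q :=
              mul_le_mul_of_nonneg_left (h2 ▸ h1) (Real.rpow_pos_of_pos two_pos (-q)).le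
            have h5 : (2:ℝ) ^ (-q) * 2 ^ q = 1 := by
              rw [← Real.rpow_add two_pos]; simp
            calc ((μ ^ 2 + m ^ 2) : ℝ) ^ q = (2:ℝ) ^ (-q) * 2 ^ q * (μ ^ 2 + m ^ 2) ^ q := by
                  rw [h5]; ring
              _ ≤ 2 ^ (-q) * S ^ q := by rw [mul_assoc]; exact h4
          have h6 : (2:ℝ) ^ (-q) ≤ 8 ^ (-q) :=
            Real.rpow_le_rpow (by norm_num) (by norm_num) (by linarith)
          rw [hK8] at h6
          calc ((μ ^ 2 + m ^ 2) : ℝ) ^ q ≤ 2 ^ (-q) * S ^ q := h3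
            _ ≤ K * S ^ q := mul_le_mul_of_nonneg_right h6 hSq.le
        calc ((μ ^ 2 + ‖ζ‖ ^ 2) ^ q : ℝ) * ‖ζ‖
            ≤ (μ ^ 2 + m ^ 2) ^ q * (μ ^ 2 + m ^ 2) ^ ((1:ℝ)/2) := by
              rw [← step3]; exact le_trans step1 step2
          _ ≤ (K * S ^ q) * (4 * ‖ξ - η‖) :=
              mul_le_mul step5 step4 (Real.rpow_pos_of_pos hmm _).le (by positivity)
          _ = 4 * (K * S ^ q) * ‖ξ - η‖ := by ring
      have tri : ‖((μ ^ 2 + ‖ξ‖ ^ 2) ^ q) • ξ - ((μ ^ 2 + ‖η‖ ^ 2) ^ q) • η‖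
          ≤ ((μ ^ 2 + ‖ξ‖ ^ 2) ^ q : ℝ) * ‖ξ‖ + ((μ ^ 2 + ‖η‖ ^ 2) ^ q : ℝ) * ‖η‖ := by
        refine (norm_sub_le _ _).trans ?_
        rw [norm_smul, norm_smul, Real.norm_eq_abs, Real.norm_eq_abs,
          abs_of_pos (Real.rpow_pos_of_pos (by positivity) q),
          abs_of_pos (Real.rpow_pos_of_pos (by positivity) q)]
      calc ‖((μ ^ 2 + ‖ξ‖ ^ 2) ^ q) • ξ - ((μ ^ 2 + ‖η‖ ^ 2) ^ q) • η‖
          ≤ ((μ ^ 2 + ‖ξ‖ ^ 2) ^ q : ℝ) * ‖ξ‖ + ((μ ^ 2 + ‖η‖ ^ 2) ^ q : ℝ) * ‖η‖ := tri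
        _ ≤ 4 * (K * S ^ q) * ‖ξ - η‖ + 4 * (K * S ^ q) * ‖ξ - η‖ :=
            add_le_add (bnd ξ hξm) (bnd η hηm)
        _ ≤ (9 + |p - 2|) * K * S ^ q * ‖ξ - η‖ := by
            have h8 : (8:ℝ) ≤ 9 + |p - 2| := by
              have := abs_nonneg (p - 2); linarith
            have h9 : (0:ℝ) ≤ K * S ^ q * ‖ξ - η‖ := by positivity
            nlinarith [mul_le_mul_of_nonneg_right h8 h9]
end

section
/- Let 0 < θ < 1 and μ > 0. Suppose v : [0, ∞) → [0, ∞) is continuous and satisfies v(t₂) − v(t₁) ≤ −μ·∫_{t₁}^{t₂} v(τ)^θ dτ for all 0 ≤ t₁ < t₂. Then for all t ≥ 0, v(t) ≤ v(0)·[1 − μ(1-θ)·v(0)^{θ-1}·t]_+^{1/(1-θ)} (interpreted as v(t) = 0 when v(0) = 0). In particular v(t) = 0 for all t ≥ v(0)^{1-θ}/(μ(1-θ)). -/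
open Set Filter Topology intervalIntegral

private lemma vmono (θ μ : ℝ) (v : ℝ → ℝ)
    (hnonneg : ∀ t, 0 ≤ t → 0 ≤ v t)
    (hdecay : ∀ t₁ t₂, 0 ≤ t₁ → t₁ < t₂ →
      v t₂ - v t₁ ≤ -μ * ∫ τ in t₁..t₂, v τ ^ θ) (hμ : 0 < μ) :
    ∀ s t, 0 ≤ s → s ≤ t → v t ≤ v s := by
  intro s t hs hst
  rcases eq_or_lt_of_le hst with rfl | h
  · exact le_rfl
  have h2 := hdecay s t hs h
  have hint : 0 ≤ ∫ τ in s..t, v τ ^ θ := by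
    apply intervalIntegral.integral_nonneg hst
    intro u hu
    exact Real.rpow_nonneg (hnonneg u (le_trans hs hu.1)) θ
  nlinarith

set_option maxHeartbeats 1000000 in
private lemma comparison (θ μ : ℝ) (hθ₀ : 0 < θ) (hθ₁ : θ < 1) (hμ : 0 < μ)
    (v : ℝ → ℝ) (hcont : ContinuousOn v (Set.Ici 0))
    (hnonneg : ∀ t, 0 ≤ t → 0 ≤ v t)
    (hdecay : ∀ t₁ t₂, 0 ≤ t₁ → t₁ < t₂ →
      v t₂ - v t₁ ≤ -μ * ∫ τ in t₁..t₂, v τ ^ θ)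
    (A lam : ℝ) (hA : v 0 ^ (1 - θ) < A) (hlam0 : 0 < lam) (hlam : lam < μ * (1 - θ)) :
    ∀ t, 0 ≤ t → t < A / lam → v t < (A - lam * t) ^ (1 / (1 - θ)) := by
  have hb : 0 < 1 - θ := by linarith
  set p : ℝ := 1 / (1 - θ) with hp_def
  have hp : 0 < p := by positivity
  set w : ℝ → ℝ := fun s => (A - lam * s) ^ p with hw_def
  have hbase : Continuous fun s : ℝ => A - lam * s := by continuity
  have hwcont : Continuous w := (Real.continuous_rpow_const hp.le).comp hbase
  have hrpowθ : Continuous fun x : ℝ => x ^ θ := Real.continuous_rpow_const hθ₀.le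
  have hA0 : 0 < A := lt_of_le_of_lt (Real.rpow_nonneg (hnonneg 0 le_rfl) _) hA
  have hv0 : v 0 = (v 0 ^ (1 - θ)) ^ p := by
    rw [← Real.rpow_mul (hnonneg 0 le_rfl)]
    rw [show (1 - θ) * p = 1 by rw [hp_def]; field_simp, Real.rpow_one]
  have hw0 : v 0 < w 0 := by
    have h1 := Real.rpow_lt_rpow (Real.rpow_nonneg (hnonneg 0 le_rfl) _) hA hp
    have h2 : w 0 = A ^ p := by show (A - lam * 0 : ℝ) ^ p = A ^ p; norm_num
    rw [h2, hv0]; exact h1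
  by_contra hcon
  push_neg at hcon
  obtain ⟨s₀, hs₀0, hs₀A, hs₀⟩ := hcon
  set K : Set ℝ := Icc 0 s₀ ∩ (fun t => v t - w t) ⁻¹' Ici 0 with hK_def
  have hKclosed : IsClosed K := by
    apply ContinuousOn.preimage_isClosed_of_isClosed _ isClosed_Icc isClosed_Ici
    exact ((hcont.mono (fun x hx => hx.1)).sub hwcont.continuousOn)
  have hs₀K : s₀ ∈ K := ⟨⟨hs₀0, le_rfl⟩, by simp [sub_nonneg.2 hs₀]; exact hs₀⟩
  have hKne : K.Nonempty := ⟨s₀, hs₀K⟩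
  have hKbdd : BddBelow K := ⟨0, fun x hx => hx.1.1⟩
  set T : ℝ := sInf K with hT_def
  have hTK : T ∈ K := hKclosed.csInf_mem hKne hKbdd
  have hT0 : 0 ≤ T := hTK.1.1
  have hTs₀ : T ≤ s₀ := hTK.1.2
  have hTA : T < A / lam := lt_of_le_of_lt hTs₀ hs₀A
  have hwvT : w T ≤ v T := by have := hTK.2; simpa [sub_nonneg] using this
  have hlt : ∀ t, 0 ≤ t → t < T → v t < w t := by
    intro t ht htT
    by_contra hle
    push_neg at hle
    have : t ∈ K := ⟨⟨ht, le_trans htT.le hTs₀⟩, by simpa [sub_nonneg] using hle⟩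
    exact absurd (csInf_le hKbdd this) (not_le.2 htT)
  have hTpos : 0 < T := by
    by_contra h
    push_neg at h
    have hT : T = 0 := le_antisymm h hT0
    rw [hT] at hwvT
    exact absurd hwvT (not_le.2 hw0)
  -- v T = w T
  have hneBot : (𝓝[Ioo 0 T] T).NeBot := by
    rw [← mem_closure_iff_nhdsWithin_neBot, closure_Ioo hTpos.ne]
    exact ⟨hT0, le_rfl⟩
  have hvT : v T = w T := by
    refine le_antisymm ?_ hwvT
    have htends : Tendsto (fun t => v t - w t) (𝓝[Ioo 0 T] T) (𝓝 (v T - w T)) := by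
      have h1 : ContinuousWithinAt v (Ioo 0 T) T :=
        (hcont T hT0).mono (fun x hx => hx.1.le)
      exact h1.sub hwcont.continuousWithinAt
    have : v T - w T ≤ 0 := by
      refine le_of_tendsto htends ?_
      filter_upwards [self_mem_nhdsWithin] with s hs
      exact (sub_nonpos.2 (hlt s hs.1.le hs.2).le)
    linarith
  have hApos : ∀ s, s ≤ T → 0 < A - lam * s := by
    intro s hs
    have : T * lam < A := by
      have := (lt_div_iff₀ hlam0).1 hTA; linarith [this]
    nlinarith
  have hwTpos : 0 < w T := Real.rpow_pos_of_pos (hApos T le_rfl) p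
  set δ : ℝ := (μ - lam / (1 - θ)) * w T ^ θ with hδ_def
  have hδ : 0 < δ := by
    have : lam / (1 - θ) < μ := (div_lt_iff₀ hb).2 (by linarith)
    exact mul_pos (by linarith) (Real.rpow_pos_of_pos hwTpos θ)
  set F : ℝ → ℝ := fun s => μ * v s ^ θ - lam / (1 - θ) * w s ^ θ with hF_def
  have hFT : F T = δ := by simp only [hF_def, hδ_def, hvT]; ring
  have hFcont : ContinuousWithinAt F (Icc 0 T) T := by
    have h1 : ContinuousWithinAt v (Icc 0 T) T := (hcont T hT0).mono (fun x hx => hx.1)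
    exact ((hrpowθ.continuousAt.comp_continuousWithinAt h1).const_mul μ).sub
      (((hrpowθ.comp hwcont).continuousWithinAt).const_mul _)
  have hev : F ⁻¹' Ioi (δ / 2) ∈ 𝓝[Icc 0 T] T := by
    apply hFcont
    rw [hFT]
    exact Ioi_mem_nhds (by linarith)
  rw [Metric.mem_nhdsWithin_iff] at hev
  obtain ⟨ε, hε, hball⟩ := hev
  set t : ℝ := max (T - ε / 2) 0 with ht_def
  have ht0 : 0 ≤ t := le_max_right _ _
  have htT : t < T := max_lt (by linarith) hTpos
  have hFlow : ∀ s ∈ Icc t T, δ / 2 ≤ F s := by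
    intro s hs
    have h1 : s ∈ Metric.ball T ε ∩ Icc 0 T := by
      constructor
      · rw [Metric.mem_ball, Real.dist_eq, abs_sub_lt_iff]
        have := le_max_left (T - ε / 2) 0
        constructor <;> nlinarith [hs.1, hs.2]
      · exact ⟨le_trans ht0 hs.1, hs.2⟩
    exact (hball h1).le
  -- FTC for w
  have hw' : ∀ s ∈ uIcc t T, HasDerivAt w (-(lam / (1 - θ)) * w s ^ θ) s := by
    intro s hs
    rw [uIcc_of_le htT.le] at hs
    have hpos := hApos s hs.2
    have h1 : HasDerivAt (fun x : ℝ => A - lam * x) (-lam) s := by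
      simpa using ((hasDerivAt_id s).const_mul lam).const_sub A
    have h2 : HasDerivAt (fun x : ℝ => x ^ p) (p * (A - lam * s) ^ (p - 1)) (A - lam * s) :=
      Real.hasDerivAt_rpow_const (Or.inl hpos.ne')
    have h3 := h2.comp s h1
    have hwsθ : w s ^ θ = (A - lam * s) ^ (p - 1) := by
      rw [hw_def]
      rw [← Real.rpow_mul hpos.le]
      congr 1
      rw [hp_def]
      field_simp
      ring
    have hco : p * -lam = -(lam / (1 - θ)) := by rw [hp_def]; field_simp
    rw [show -(lam / (1 - θ)) * w s ^ θ = p * (A - lam * s) ^ (p - 1) * -lam by rw [hwsθ, ← hco]; ring]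
    exact h3
  have hw'int : IntervalIntegrable (fun s => -(lam / (1 - θ)) * w s ^ θ) MeasureTheory.volume t T :=
    ((continuous_const.mul (hrpowθ.comp hwcont)).continuousOn).intervalIntegrable
  have hFTC : ∫ s in t..T, -(lam / (1 - θ)) * w s ^ θ = w T - w t :=
    integral_eq_sub_of_hasDerivAt hw' hw'int
  have hJ : ∫ s in t..T, -(lam / (1 - θ)) * w s ^ θ
      = -(lam / (1 - θ)) * ∫ s in t..T, w s ^ θ := integral_const_mul _ _
  set J : ℝ := ∫ s in t..T, w s ^ θ with hJ_def
  set I : ℝ := ∫ s in t..T, v s ^ θ with hI_def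
  have hvineq : v T - v t ≤ -μ * I := hdecay t T ht0 htT
  -- integrability of F
  have hvθint : IntervalIntegrable (fun s => v s ^ θ) MeasureTheory.volume t T := by
    apply ContinuousOn.intervalIntegrable
    apply hrpowθ.comp_continuousOn
    apply hcont.mono
    rw [uIcc_of_le htT.le]
    exact fun x hx => le_trans ht0 hx.1
  have hwθint : IntervalIntegrable (fun s => w s ^ θ) MeasureTheory.volume t T :=
    ((hrpowθ.comp hwcont).continuousOn).intervalIntegrable
  have hFint : IntervalIntegrable F MeasureTheory.volume t T :=
    (hvθint.const_mul μ).sub (hwθint.const_mul _)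
  have hFsplit : ∫ s in t..T, F s = μ * I - lam / (1 - θ) * J := by
    rw [hF_def]
    rw [integral_sub (hvθint.const_mul μ) (hwθint.const_mul _),
      integral_const_mul, integral_const_mul]
  have hFge : δ / 2 * (T - t) ≤ ∫ s in t..T, F s := by
    have h1 : ∫ s in t..T, (δ / 2 : ℝ) = δ / 2 * (T - t) := by
      rw [integral_const, smul_eq_mul]; ring
    rw [← h1]
    exact integral_mono_on htT.le intervalIntegrable_const hFint hFlow
  have hwvt : v t < w t := hlt t ht0 htT
  have hkey : w T - w t = -(lam / (1 - θ)) * J := by rw [← hFTC, hJ]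
  have hfin : δ / 2 * (T - t) ≤ μ * I - lam / (1 - θ) * J := by rw [← hFsplit]; exact hFge
  have hprod : 0 < δ / 2 * (T - t) := mul_pos (half_pos hδ) (sub_pos.2 htT)
  linarith [hvT, hwvt, hvineq, hkey, hfin, hprod]

set_option maxHeartbeats 1000000 in
private lemma bound (θ μ : ℝ) (hθ₀ : 0 < θ) (hθ₁ : θ < 1) (hμ : 0 < μ)
    (v : ℝ → ℝ) (hcont : ContinuousOn v (Set.Ici 0))
    (hnonneg : ∀ t, 0 ≤ t → 0 ≤ v t)
    (hdecay : ∀ t₁ t₂, 0 ≤ t₁ → t₁ < t₂ →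
      v t₂ - v t₁ ≤ -μ * ∫ τ in t₁..t₂, v τ ^ θ)
    (A lam : ℝ) (hA : v 0 ^ (1 - θ) < A) (hlam0 : 0 < lam) (hlam : lam < μ * (1 - θ)) :
    ∀ t, 0 ≤ t → v t ≤ max (A - lam * t) 0 ^ (1 / (1 - θ)) := by
  have hb : 0 < 1 - θ := by linarith
  have hp : 0 < 1 / (1 - θ) := by positivity
  have hA0 : 0 < A := lt_of_le_of_lt (Real.rpow_nonneg (hnonneg 0 le_rfl) _) hA
  have hE : 0 < A / lam := div_pos hA0 hlam0
  intro t ht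
  rcases lt_or_ge t (A / lam) with h | h
  · have hmax : max (A - lam * t) 0 = A - lam * t := by
      rw [max_eq_left]
      have := (lt_div_iff₀ hlam0).1 h
      nlinarith
    rw [hmax]
    exact (comparison θ μ hθ₀ hθ₁ hμ v hcont hnonneg hdecay A lam hA hlam0 hlam t ht h).le
  · have hvt0 : v t ≤ 0 := by
      have hneBot : (𝓝[Ioo 0 (A / lam)] (A / lam)).NeBot := by
        rw [← mem_closure_iff_nhdsWithin_neBot, closure_Ioo hE.ne]
        exact ⟨hE.le, le_rfl⟩
      have htends : Tendsto (fun s => (A - lam * s) ^ (1 / (1 - θ)))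
          (𝓝[Ioo 0 (A / lam)] (A / lam)) (𝓝 0) := by
        have h1 : ContinuousAt (fun x : ℝ => x ^ (1 / (1 - θ))) 0 :=
          Real.continuousAt_rpow_const 0 _ (Or.inr hp.le)
        have h2 : Continuous fun s : ℝ => A - lam * s := by continuity
        have h3 : ContinuousAt (fun s : ℝ => (A - lam * s) ^ (1 / (1 - θ))) (A / lam) := by
          have he : A - lam * (A / lam) = 0 := by field_simp; ring
          exact ContinuousAt.comp (by rw [he] at *; exact h1) h2.continuousAt
        have h4 := h3.tendsto.mono_left (nhdsWithin_le_nhds (s := Ioo 0 (A / lam)))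
        have he : A - lam * (A / lam) = 0 := by field_simp; ring
        rw [he, Real.zero_rpow (by positivity : (1:ℝ)/(1-θ) ≠ 0)] at h4
        exact h4
      refine ge_of_tendsto htends ?_
      filter_upwards [self_mem_nhdsWithin] with s hs
      have h1 : v t ≤ v s := vmono θ μ v hnonneg hdecay hμ s t hs.1.le (le_trans hs.2.le h)
      exact h1.trans
        (comparison θ μ hθ₀ hθ₁ hμ v hcont hnonneg hdecay A lam hA hlam0 hlam s hs.1.le hs.2).le
    exact hvt0.trans (Real.rpow_nonneg (le_max_right _ _) _)

theorem stmt_19 (θ μ : ℝ) (hθ₀ : 0 < θ) (hθ₁ : θ < 1) (hμ : 0 < μ)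
    (v : ℝ → ℝ) (hcont : ContinuousOn v (Set.Ici 0))
    (hnonneg : ∀ t, 0 ≤ t → 0 ≤ v t)
    (hdecay : ∀ t₁ t₂, 0 ≤ t₁ → t₁ < t₂ →
      v t₂ - v t₁ ≤ -μ * ∫ τ in t₁..t₂, v τ ^ θ) :
    (∀ t, 0 ≤ t →
      v t ≤ v 0 * max (1 - μ * (1 - θ) * v 0 ^ (θ - 1) * t) 0 ^ (1 / (1 - θ))) ∧
    (∀ t, v 0 ^ (1 - θ) / (μ * (1 - θ)) ≤ t → v t = 0) := by
  have hb : 0 < 1 - θ := by linarith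
  have hp : 0 < 1 / (1 - θ) := by positivity
  have hμb : 0 < μ * (1 - θ) := by positivity
  have h1 : ∀ t, 0 ≤ t →
      v t ≤ v 0 * max (1 - μ * (1 - θ) * v 0 ^ (θ - 1) * t) 0 ^ (1 / (1 - θ)) := by
    intro t ht
    rcases eq_or_lt_of_le (hnonneg 0 le_rfl) with h0 | h0
    · have hvt : v t ≤ 0 := by
        have := vmono θ μ v hnonneg hdecay hμ 0 t le_rfl ht
        linarith [this]
      calc v t ≤ 0 := hvt
        _ = v 0 * max (1 - μ * (1 - θ) * v 0 ^ (θ - 1) * t) 0 ^ (1 / (1 - θ)) := by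
          rw [← h0, zero_mul]
    · -- v 0 > 0
      have hvb : 0 < v 0 ^ (1 - θ) := Real.rpow_pos_of_pos h0 _
      have key : ∀ ε : ℝ, 0 < ε → ε < μ * (1 - θ) →
          v t ≤ max (v 0 ^ (1 - θ) + ε - (μ * (1 - θ) - ε) * t) 0 ^ (1 / (1 - θ)) := by
        intro ε hε hε'
        exact bound θ μ hθ₀ hθ₁ hμ v hcont hnonneg hdecay (v 0 ^ (1 - θ) + ε)
          (μ * (1 - θ) - ε) (lt_add_of_pos_right _ hε) (by linarith) (by linarith) t ht
      have hlim : Tendsto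
          (fun ε : ℝ => max (v 0 ^ (1 - θ) + ε - (μ * (1 - θ) - ε) * t) 0 ^ (1 / (1 - θ)))
          (𝓝[>] 0) (𝓝 (max (v 0 ^ (1 - θ) - μ * (1 - θ) * t) 0 ^ (1 / (1 - θ)))) := by
        have hinner : ContinuousAt
            (fun ε : ℝ => max (v 0 ^ (1 - θ) + ε - (μ * (1 - θ) - ε) * t) 0) 0 := by
          apply Continuous.continuousAt
          continuity
        have hval : max (v 0 ^ (1 - θ) + 0 - (μ * (1 - θ) - 0) * t) 0
            = max (v 0 ^ (1 - θ) - μ * (1 - θ) * t) 0 := by norm_num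
        have houter : ContinuousAt (fun x : ℝ => x ^ (1 / (1 - θ)))
            (max (v 0 ^ (1 - θ) + 0 - (μ * (1 - θ) - 0) * t) 0) :=
          Real.continuousAt_rpow_const _ _ (Or.inr hp.le)
        have hcomp := (houter.tendsto.comp hinner.tendsto).mono_left
          (nhdsWithin_le_nhds (s := Ioi (0:ℝ)))
        rw [show (fun ε : ℝ => max (v 0 ^ (1 - θ) + ε - (μ * (1 - θ) - ε) * t) 0 ^ (1 / (1 - θ)))
            = (fun x : ℝ => x ^ (1 / (1 - θ))) ∘
              (fun ε : ℝ => max (v 0 ^ (1 - θ) + ε - (μ * (1 - θ) - ε) * t) 0) from rfl]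
        rw [← hval]
        exact hcomp
      have hle : v t ≤ max (v 0 ^ (1 - θ) - μ * (1 - θ) * t) 0 ^ (1 / (1 - θ)) := by
        refine ge_of_tendsto hlim ?_
        filter_upwards [Ioo_mem_nhdsGT_of_mem (⟨le_rfl, hμb⟩ : (0:ℝ) ∈ Ico 0 (μ * (1 - θ)))]
          with ε hε
        exact key ε hε.1 hε.2
      have hid : v 0 ^ (1 - θ) * v 0 ^ (θ - 1) = 1 := by
        rw [← Real.rpow_add h0]
        norm_num
      have e1 : v 0 ^ (1 - θ) - μ * (1 - θ) * t
          = v 0 ^ (1 - θ) * (1 - μ * (1 - θ) * v 0 ^ (θ - 1) * t) := by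
        linear_combination (μ * (1 - θ) * t) * hid
      have e2 : max (v 0 ^ (1 - θ) - μ * (1 - θ) * t) 0 ^ (1 / (1 - θ))
          = v 0 * max (1 - μ * (1 - θ) * v 0 ^ (θ - 1) * t) 0 ^ (1 / (1 - θ)) := by
        rw [e1]
        have e3 : max (v 0 ^ (1 - θ) * (1 - μ * (1 - θ) * v 0 ^ (θ - 1) * t)) 0
            = v 0 ^ (1 - θ) * max (1 - μ * (1 - θ) * v 0 ^ (θ - 1) * t) 0 := by
          rw [mul_max_of_nonneg _ _ hvb.le, mul_zero]
        rw [e3, Real.mul_rpow hvb.le (le_max_right _ _)]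
        congr 1
        rw [← Real.rpow_mul (hnonneg 0 le_rfl),
          show (1 - θ) * (1 / (1 - θ)) = 1 by field_simp, Real.rpow_one]
      rw [← e2]
      exact hle
  refine ⟨h1, ?_⟩
  intro t htt
  have ht0 : 0 ≤ t :=
    le_trans (div_nonneg (Real.rpow_nonneg (hnonneg 0 le_rfl) _) hμb.le) htt
  have hvt := hnonneg t ht0
  rcases eq_or_lt_of_le (hnonneg 0 le_rfl) with h0 | h0
  · have := vmono θ μ v hnonneg hdecay hμ 0 t le_rfl ht0
    linarith
  · have hid : v 0 ^ (1 - θ) * v 0 ^ (θ - 1) = 1 := by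
      rw [← Real.rpow_add h0]
      norm_num
    have hvbp : 0 < v 0 ^ (θ - 1) := Real.rpow_pos_of_pos h0 _
    have harg : 1 - μ * (1 - θ) * v 0 ^ (θ - 1) * t ≤ 0 := by
      have h2 : v 0 ^ (1 - θ) ≤ μ * (1 - θ) * t := by
        have := (div_le_iff₀ hμb).1 htt
        linarith
      nlinarith
    have hmax : max (1 - μ * (1 - θ) * v 0 ^ (θ - 1) * t) 0 = 0 := max_eq_right harg
    have := h1 t ht0
    rw [hmax, Real.zero_rpow (by positivity : (1:ℝ)/(1-θ) ≠ 0), mul_zero] at this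
    linarith
end
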